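/- Let W be a finite-dimensional complex vector space and let V be a finite-dimensional linear subspace of Sym(W) spanned by homogeneous elements of positive degree. Then there exists r₀ such that for all r ≥ r₀ the following holds: for any y, z ∈ Sym(V) with z ≠ 0, if i_r(z) divides i_r(y) in Sym(W)^{⊗r}, then z divides y in Sym(V). (Equivalently: if x ∈ Frac(Sym(V)) satisfies i_r(x) ∈ Sym(W)^{⊗r}, then x ∈ Sym(V).) -/

import Mathlib

open Finset in
private lemma geom_aux {m : ℕ} {u : ℂ} (hu : u ^ m = 1) (hu1 : u ≠ 1) :
    ∑ k ∈ Finset.range m, u ^ k = 0 := by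
  rw [geom_sum_eq hu1, hu]
  simp

open Finset in
private lemma lemB {R : Type*} [CommRing R] [Algebra ℂ R] (m : ℕ) (hm : 1 ≤ m) (c : R) :
    ∃ L : Multiset R, (L.map (· ^ m)).sum = c := by
  rcases eq_or_lt_of_le hm with h1 | h2
  · exact ⟨{c}, by simp [← h1]⟩
  have hm0 : (m : ℕ) ≠ 0 := by omega
  have hζ := Complex.isPrimitiveRoot_exp m hm0
  set ζ : ℂ := Complex.exp (2 * Real.pi * Complex.I / m) with hζdef
  have hω : ∀ k : ℕ, ∃ w : ℂ, w ^ m = ζ ^ k := fun k =>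
    IsAlgClosed.exists_pow_nat_eq (ζ ^ k) (by omega)
  choose ω hω using hω
  set a : ℂ →+* R := algebraMap ℂ R with ha
  set p : R := a (((m : ℂ) ^ 2)⁻¹) * c with hp
  refine ⟨(Multiset.range m).map (fun k => a (ω k) * (p + a (ζ ^ k))), ?_⟩
  have hsum : ((Multiset.range m).map (fun k => a (ω k) * (p + a (ζ ^ k))) |>.map (· ^ m)).sum
      = ∑ k ∈ Finset.range m, (a (ω k) * (p + a (ζ ^ k))) ^ m := by
    rw [Multiset.map_map]; rfl
  rw [hsum]
  have key : ∀ k, (a (ω k) * (p + a (ζ ^ k))) ^ m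
      = ∑ j ∈ Finset.range (m + 1), p ^ j * (m.choose j : R) * a ((ζ ^ (m - j + 1)) ^ k) := by
    intro k
    rw [mul_pow, ← map_pow, hω, add_pow, Finset.mul_sum]
    refine Finset.sum_congr rfl fun j hj => ?_
    rw [← map_pow, ← pow_mul]
    have : (ζ ^ (m - j + 1)) ^ k = ζ ^ k * ζ ^ (k * (m - j)) := by
      rw [← pow_mul, ← pow_add]
      ring_nf
    rw [this, map_mul]
    ring
  rw [Finset.sum_congr rfl (fun k _ => key k), Finset.sum_comm]
  have inner : ∀ j ∈ Finset.range (m + 1),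
      ∑ k ∈ Finset.range m, (ζ ^ (m - j + 1)) ^ k = if j = 1 then (m : ℂ) else 0 := by
    intro j hj
    simp only [Finset.mem_range] at hj
    by_cases hj1 : j = 1
    · subst hj1
      have : m - 1 + 1 = m := by omega
      rw [this, hζ.pow_eq_one]
      simp
    · rw [if_neg hj1]
      have hne : ζ ^ (m - j + 1) ≠ 1 := by
        intro h
        rw [hζ.pow_eq_one_iff_dvd] at h
        obtain ⟨t, ht⟩ := h
        have h2t : t = 0 ∨ t = 1 ∨ 2 ≤ t := by omega
        rcases h2t with rfl | rfl | h2t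
        · omega
        · omega
        · have : m * 2 ≤ m * t := Nat.mul_le_mul le_rfl h2t
          omega
      have hpow : (ζ ^ (m - j + 1)) ^ m = 1 := by
        rw [← pow_mul, mul_comm, pow_mul, hζ.pow_eq_one, one_pow]
      exact geom_aux hpow hne
  calc ∑ j ∈ Finset.range (m + 1), ∑ k ∈ Finset.range m,
        p ^ j * (m.choose j : R) * a ((ζ ^ (m - j + 1)) ^ k)
      = ∑ j ∈ Finset.range (m + 1), p ^ j * (m.choose j : R)
          * a (if j = 1 then (m : ℂ) else 0) := by
        refine Finset.sum_congr rfl fun j hj => ?_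
        rw [← Finset.mul_sum, ← map_sum, inner j hj]
    _ = p ^ 1 * (m.choose 1 : R) * a (m : ℂ) := by
        rw [Finset.sum_eq_single 1]
        · simp
        · intro j hj hj1
          rw [if_neg hj1]
          simp
        · intro h
          exact absurd (Finset.mem_range.2 (by omega)) h
    _ = c := by
        rw [pow_one, Nat.choose_one_right, hp]
        have hmc : (m : ℂ) ≠ 0 := Nat.cast_ne_zero.2 hm0
        have hc : (m : R) = a (m : ℂ) := by simp [ha]
        have h2 : a (((m : ℂ) ^ 2)⁻¹) * c * a (m : ℂ) * a (m : ℂ)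
            = a (((m : ℂ) ^ 2)⁻¹ * (m : ℂ) * (m : ℂ)) * c := by
          rw [map_mul, map_mul]; ring
        have h1 : ((m : ℂ) ^ 2)⁻¹ * (m : ℂ) * (m : ℂ) = 1 := by field_simp
        rw [hc, h2, h1, map_one, one_mul]

open Finset in
private lemma lemA {R : Type*} [CommRing R] [Algebra ℂ R] (D : ℕ) :
    ∀ n d₀, D - d₀ ≤ n → 1 ≤ d₀ → d₀ ≤ D → ∀ c : R, ∃ L : Multiset R,
      ∀ d, 1 ≤ d → d ≤ D → (L.map (· ^ d)).sum = if d = d₀ then c else 0 := by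
  intro n
  induction n using Nat.strong_induction_on with
  | _ n IH =>
  intro d₀ hn h1 hD c
  have hd0 : (d₀ : ℕ) ≠ 0 := by omega
  have hζ := Complex.isPrimitiveRoot_exp d₀ hd0
  set ζ : ℂ := Complex.exp (2 * Real.pi * Complex.I / d₀) with hζdef
  set a : ℂ →+* R := algebraMap ℂ R with ha
  obtain ⟨L₀, hL₀⟩ := lemB (R := R) d₀ h1 (a ((d₀ : ℂ)⁻¹) * c)
  set L₁ : Multiset R := L₀.bind (fun q => (Multiset.range d₀).map (fun k => a (ζ ^ k) * q))
    with hL₁def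
  have hgeom : ∀ d : ℕ, ∑ k ∈ Finset.range d₀, (ζ ^ d) ^ k
      = if d₀ ∣ d then (d₀ : ℂ) else 0 := by
    intro d
    by_cases hdvd : d₀ ∣ d
    · rw [if_pos hdvd]
      have : ζ ^ d = 1 := (hζ.pow_eq_one_iff_dvd d).2 hdvd
      simp [this]
    · rw [if_neg hdvd]
      have hne : ζ ^ d ≠ 1 := fun h => hdvd ((hζ.pow_eq_one_iff_dvd d).1 h)
      have hpow : (ζ ^ d) ^ d₀ = 1 := by
        rw [← pow_mul, mul_comm, pow_mul, hζ.pow_eq_one, one_pow]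
      exact geom_aux hpow hne
  have hinner : ∀ (d : ℕ) (q : R),
      (((Multiset.range d₀).map (fun k => a (ζ ^ k) * q)).map (· ^ d)).sum
      = a (if d₀ ∣ d then (d₀ : ℂ) else 0) * q ^ d := by
    intro d q
    have h0 : (((Multiset.range d₀).map (fun k => a (ζ ^ k) * q)).map (· ^ d)).sum
        = ∑ k ∈ Finset.range d₀, (a (ζ ^ k) * q) ^ d := by
      rw [Multiset.map_map]; rfl
    rw [h0, ← hgeom d, map_sum, Finset.sum_mul]
    refine Finset.sum_congr rfl fun k _ => ?_
    rw [mul_pow, ← map_pow, ← pow_mul, mul_comm k d, pow_mul]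
  have hL₁ : ∀ d : ℕ, (L₁.map (· ^ d)).sum
      = a (if d₀ ∣ d then (d₀ : ℂ) else 0) * (L₀.map (· ^ d)).sum := by
    intro d
    rw [hL₁def, Multiset.map_bind, Multiset.sum_bind]
    calc (L₀.map fun q => (((Multiset.range d₀).map (fun k => a (ζ ^ k) * q)).map (· ^ d)).sum).sum
        = (L₀.map fun q => a (if d₀ ∣ d then (d₀ : ℂ) else 0) * q ^ d).sum := by
          rw [Multiset.map_congr rfl (fun q _ => hinner d q)]
      _ = a (if d₀ ∣ d then (d₀ : ℂ) else 0) * (L₀.map (· ^ d)).sum :=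
          Multiset.sum_map_mul_left
  -- the junk set
  set J : Finset ℕ := (Finset.Ioc d₀ D).filter (d₀ ∣ ·) with hJdef
  have hJmem : ∀ d, d ∈ J ↔ (d₀ < d ∧ d ≤ D ∧ d₀ ∣ d) := by
    intro d
    simp [hJdef, Finset.mem_filter, Finset.mem_Ioc, and_assoc]
  have hexJ : ∀ d ∈ J, ∃ L : Multiset R, ∀ d', 1 ≤ d' → d' ≤ D →
      (L.map (· ^ d')).sum
        = if d' = d then -(a (d₀ : ℂ) * (L₀.map (· ^ d)).sum) else 0 := by
    intro d hd
    rw [hJmem] at hd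
    exact IH (D - d) (by omega) d (by omega) (by omega) (by omega) _
  choose! LJ hLJ using hexJ
  refine ⟨L₁ + ∑ d ∈ J, LJ d, ?_⟩
  intro d' hd'1 hd'D
  have hhom : ∀ (s : Finset ℕ) (F : ℕ → Multiset R),
      (((∑ d ∈ s, F d).map (· ^ d'))).sum = ∑ d ∈ s, ((F d).map (· ^ d')).sum := by
    intro s F
    classical
    induction s using Finset.induction_on with
    | empty => simp
    | insert _ _ hnot ih =>
        rw [Finset.sum_insert hnot, Multiset.map_add, Multiset.sum_add, ih,
          Finset.sum_insert hnot]
  rw [Multiset.map_add, Multiset.sum_add, hL₁ d', hhom]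
  have hJsum : ∑ d ∈ J, ((LJ d).map (· ^ d')).sum
      = if d' ∈ J then -(a (d₀ : ℂ) * (L₀.map (· ^ d')).sum) else 0 := by
    rw [Finset.sum_congr rfl (fun d hd => hLJ d hd d' hd'1 hd'D)]
    exact Finset.sum_ite_eq J d' _
  rw [hJsum]
  by_cases hdd : d' = d₀
  · subst hdd
    rw [if_pos rfl, if_pos (dvd_refl d'), hL₀, if_neg (by rw [hJmem]; omega)]
    rw [← mul_assoc, ← map_mul]
    have hmc : (d' : ℂ) ≠ 0 := Nat.cast_ne_zero.2 hd0
    rw [mul_inv_cancel₀ hmc, map_one, one_mul, add_zero]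
  · rw [if_neg hdd]
    by_cases hdvd : d₀ ∣ d'
    · have hmem : d' ∈ J := by
        rw [hJmem]
        have := Nat.le_of_dvd (by omega) hdvd
        refine ⟨lt_of_le_of_ne this (fun h => hdd h.symm), hd'D, hdvd⟩
      rw [if_pos hdvd, if_pos hmem, add_neg_cancel]
    · rw [if_neg hdvd, if_neg (by rw [hJmem]; tauto), map_zero, zero_mul, add_zero]

open MvPolynomial in
private lemma homog_eval {N : ℕ} {R : Type*} [CommRing R] [Algebra ℂ R]
    {f : MvPolynomial (Fin N) ℂ} {n : ℕ} (hf : f.IsHomogeneous n) (q : R) (w : Fin N → ℂ) :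
    aeval (fun ℓ => q * algebraMap ℂ R (w ℓ)) f = q ^ n * algebraMap ℂ R (eval w f) := by
  rw [aeval_def, eval₂_eq, eval_eq, map_sum, Finset.mul_sum]
  refine Finset.sum_congr rfl fun d hd => ?_
  have hdeg : ∑ i ∈ d.support, d i = n := by
    have h := hf (MvPolynomial.mem_support_iff.1 hd)
    rw [show (1 : Fin N → ℕ) = fun _ => 1 from rfl, ← Finsupp.degree_eq_weight_one] at h
    exact h
  have hprod : ∏ i ∈ d.support, (q * algebraMap ℂ R (w i)) ^ d i
      = q ^ n * algebraMap ℂ R (∏ i ∈ d.support, w i ^ d i) := by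
    rw [map_prod]
    calc ∏ i ∈ d.support, (q * algebraMap ℂ R (w i)) ^ d i
        = ∏ i ∈ d.support, (q ^ d i * algebraMap ℂ R (w i) ^ d i) := by
          refine Finset.prod_congr rfl fun i _ => ?_
          rw [mul_pow]
      _ = (∏ i ∈ d.support, q ^ d i) * ∏ i ∈ d.support, algebraMap ℂ R (w i) ^ d i :=
          Finset.prod_mul_distrib
      _ = q ^ n * ∏ i ∈ d.support, algebraMap ℂ R (w i) ^ d i := by
          rw [Finset.prod_pow_eq_pow_sum, hdeg]
      _ = q ^ n * ∏ i ∈ d.support, algebraMap ℂ R (w i ^ d i) := by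
          simp [map_pow]
  rw [hprod, map_mul]
  ring

open MvPolynomial in
private lemma dual_points {N : ℕ} {ι : Type*} [Fintype ι] [DecidableEq ι]
    (h : ι → MvPolynomial (Fin N) ℂ) (hind : LinearIndependent ℂ h) (f : ι) :
    ∃ μ : (Fin N → ℂ) →₀ ℂ, ∀ f' : ι,
      (μ.sum fun w c => c * MvPolynomial.eval w (h f')) = if f' = f then 1 else 0 := by
  classical
  set Ev : (Fin N → ℂ) → (ι → ℂ) := fun w f' => MvPolynomial.eval w (h f') with hEv
  have hspan : Submodule.span ℂ (Set.range Ev) = ⊤ := by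
    by_contra hne
    obtain ⟨φ, φ0, hφ⟩ := Submodule.exists_dual_map_eq_bot_of_lt_top
      (lt_top_iff_ne_top.2 hne) inferInstance
    set c : ι → ℂ := fun g => φ (fun j => if g = j then 1 else 0) with hc
    have hφx : ∀ x : ι → ℂ, φ x = ∑ g, x g * c g := by
      intro x
      conv_lhs => rw [pi_eq_sum_univ x]
      rw [map_sum]
      refine Finset.sum_congr rfl fun g _ => ?_
      rw [LinearMap.map_smul, smul_eq_mul, hc]
    have hev0 : ∀ w, φ (Ev w) = 0 := by
      intro w
      have : φ (Ev w) ∈ Submodule.map φ (Submodule.span ℂ (Set.range Ev)) :=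
        Submodule.mem_map_of_mem (Submodule.subset_span (Set.mem_range_self w))
      rw [hφ] at this
      exact this
    have hpoly : (∑ g, c g • h g) = 0 := by
      apply MvPolynomial.funext
      intro w
      rw [map_sum, map_zero]
      have h0 := hev0 w
      rw [hφx] at h0
      rw [← h0]
      refine Finset.sum_congr rfl fun g _ => ?_
      rw [MvPolynomial.smul_eq_C_mul, map_mul, MvPolynomial.eval_C]
      exact mul_comm _ _
    have hc0 : ∀ g, c g = 0 := by
      have := Fintype.linearIndependent_iff.1 hind c (by rw [← hpoly])
      exact this
    apply φ0
    refine LinearMap.ext fun x => ?_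
    rw [hφx]
    simp [hc0]
  have htop : (fun f' => if f' = f then (1:ℂ) else 0) ∈ Submodule.span ℂ (Set.range Ev) := by
    rw [hspan]; trivial
  obtain ⟨μ, hμ⟩ := Finsupp.mem_span_range_iff_exists_finsupp.1 htop
  refine ⟨μ, fun f' => ?_⟩
  have h3 : (μ.sum fun w c => c * MvPolynomial.eval w (h f'))
      = (μ.sum fun i a => a • Ev i) f' := by
    rw [Finsupp.sum, Finsupp.sum, Finset.sum_apply]
    rfl
  rw [h3, hμ]

private lemma multiset_sum_map_sum {γ α β : Type*} [AddCommMonoid β] (s : Finset γ)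
    (F : γ → Multiset α) (φ : α → β) :
    ((∑ x ∈ s, F x).map φ).sum = ∑ x ∈ s, ((F x).map φ).sum := by
  classical
  induction s using Finset.induction_on with
  | empty => simp
  | insert _ _ hnot ih =>
      rw [Finset.sum_insert hnot, Multiset.map_add, Multiset.sum_add, ih, Finset.sum_insert hnot]

private lemma list_sum_range {α β : Type*} [AddCommMonoid β] (l : List α) (d : α) (φ : α → β) :
    ∑ n ∈ Finset.range l.length, φ (l.getD n d) = (l.map φ).sum := by
  induction l with
  | nil => simp
  | cons a t ih =>
      rw [List.length_cons, Finset.sum_range_succ', List.map_cons, List.sum_cons, ← ih, add_comm]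
      congr 1



/-- Concrete model of the map `i_r : Sym(V) → Sym(W)^{⊗r}`.  Here `Sym(W)` for `W = ℂ^N` is
modelled by the polynomial ring `ℂ[y_1, …, y_N]`, the subspace `V ⊆ Sym(W)` is given together
with a basis `b : Fin κ → V`, `Sym(V)` is modelled by the polynomial ring `ℂ[z_1, …, z_κ]`
(via the basis `b`), and `Sym(W)^{⊗r}` is modelled by the polynomial ring in `r` disjoint
copies of the variables, the `s`-th factor inclusion being the renaming `y_j ↦ y_{(s,j)}`.
The map `i_r` sends the basis vector `z_v` of `V` to `∑_{s=1}^r 1 ⊗ ⋯ ⊗ b v ⊗ ⋯ ⊗ 1`. -/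
noncomputable def iMap (N κ r : ℕ) (V : Submodule ℂ (MvPolynomial (Fin N) ℂ))
    (b : Module.Basis (Fin κ) ℂ V) :
    MvPolynomial (Fin κ) ℂ →ₐ[ℂ] MvPolynomial (Fin r × Fin N) ℂ :=
  MvPolynomial.aeval fun v : Fin κ =>
    ∑ s : Fin r, MvPolynomial.rename (Prod.mk s) ((b v : MvPolynomial (Fin N) ℂ))

section
set_option maxHeartbeats 1000000
open MvPolynomial

/-- If `V` is a finite-dimensional subspace of `Sym(W)` spanned by homogeneous elements of
positive degree, then for all sufficiently large `r`: whenever `i_r(z)` divides `i_r(y)` in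
`Sym(W)^{⊗r}` with `z ≠ 0`, already `z` divides `y` in `Sym(V)`.  (Equivalently, an element
`x ∈ Frac(Sym(V))` with `i_r(x) ∈ Sym(W)^{⊗r}` lies in `Sym(V)`.) -/
theorem iMap_divides_descend_for_large_r (N κ : ℕ) (V : Submodule ℂ (MvPolynomial (Fin N) ℂ))
    (b : Module.Basis (Fin κ) ℂ V)
    (hV : ∃ S : Set (MvPolynomial (Fin N) ℂ), V = Submodule.span ℂ S ∧
      ∀ f ∈ S, ∃ d : ℕ, 1 ≤ d ∧ f ∈ MvPolynomial.homogeneousSubmodule (Fin N) ℂ d) :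
    ∃ r₀ : ℕ, ∀ r : ℕ, r₀ ≤ r → ∀ y z : MvPolynomial (Fin κ) ℂ, z ≠ 0 →
      iMap N κ r V b z ∣ iMap N κ r V b y → z ∣ y := by
  classical
  obtain ⟨S, hVS, hS⟩ := hV
  obtain ⟨T, hTS, hTspan, hTind⟩ := exists_linearIndependent ℂ S
  have hVT : V = Submodule.span ℂ T := by rw [hVS, ← hTspan]
  -- finiteness of T
  have hbspan : Submodule.span ℂ (Set.range fun u : Fin κ => (b u : MvPolynomial (Fin N) ℂ))
      = V := by
    have h1 : (Set.range fun u : Fin κ => (b u : MvPolynomial (Fin N) ℂ))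
        = V.subtype '' Set.range b := by
      rw [← Set.range_comp]; rfl
    rw [h1, Submodule.span_image, b.span_eq, Submodule.map_top, Submodule.range_subtype]
  have hTfinite : Finite ↥T := by
    refine hTind.finite_of_le_span_finite _
      (Set.range fun u : Fin κ => (b u : MvPolynomial (Fin N) ℂ)) ?_
    rintro x ⟨f, rfl⟩
    rw [hbspan]
    exact hVT ▸ Submodule.subset_span f.2
  haveI : Fintype ↥T := Fintype.ofFinite ↥T
  -- degrees
  have hdeg : ∀ f : T, ∃ d : ℕ, 1 ≤ d ∧ (f : MvPolynomial (Fin N) ℂ).IsHomogeneous d := by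
    intro f
    obtain ⟨d, h1, h2⟩ := hS f (hTS f.2)
    exact ⟨d, h1, (mem_homogeneousSubmodule _ _).1 h2⟩
  choose dg hdg1 hdg2 using hdeg
  set D : ℕ := Finset.univ.sup dg with hD
  have hdgD : ∀ f : T, dg f ≤ D := fun f => Finset.le_sup (Finset.mem_univ f)
  -- membership of T-elements in V
  have hTV : ∀ f : T, (f : MvPolynomial (Fin N) ℂ) ∈ V := fun f =>
    hVT ▸ Submodule.subset_span f.2
  -- coordinate map
  set e : V →ₗ[ℂ] MvPolynomial (Fin κ) ℂ :=
    (Finsupp.linearCombination ℂ fun u : Fin κ => (X u : MvPolynomial (Fin κ) ℂ)).comp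
      b.repr.toLinearMap with he
  have heb : ∀ u : Fin κ, e (b u) = X u := by
    intro u
    rw [he]
    simp [Finsupp.linearCombination_single]
  -- duality data
  choose μ hμ using (fun f : T => dual_points (fun g : T => (g : MvPolynomial (Fin N) ℂ)) hTind f)
  -- power-sum multisets
  have hQex : ∀ (f : T) (w : Fin N → ℂ), ∃ L : Multiset (MvPolynomial (Fin κ) ℂ),
      ∀ d, 1 ≤ d → d ≤ D → (L.map (· ^ d)).sum
        = if d = dg f then C (μ f w) * e ⟨(f : MvPolynomial (Fin N) ℂ), hTV f⟩ else 0 := by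
    intro f w
    exact lemA D (D - dg f) (dg f) le_rfl (hdg1 f) (hdgD f) _
  choose Q hQ using hQex
  -- the slots
  set Slots : Multiset (MvPolynomial (Fin κ) ℂ × (Fin N → ℂ)) :=
    ∑ f : T, ∑ w ∈ (μ f).support, (Q f w).map (fun q => (q, w)) with hSlots
  -- key property
  have KP : ∀ f' : T,
      (Slots.map (fun p => p.1 ^ dg f' * C (eval p.2 (f' : MvPolynomial (Fin N) ℂ)))).sum
        = e ⟨(f' : MvPolynomial (Fin N) ℂ), hTV f'⟩ := by
    intro f'
    set φ : MvPolynomial (Fin κ) ℂ × (Fin N → ℂ) → MvPolynomial (Fin κ) ℂ :=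
      fun p => p.1 ^ dg f' * C (eval p.2 (f' : MvPolynomial (Fin N) ℂ)) with hφ
    have hterm : ∀ f : T,
        ((∑ w ∈ (μ f).support, (Q f w).map (fun q => (q, w))).map φ).sum
          = if f = f' then e ⟨(f' : MvPolynomial (Fin N) ℂ), hTV f'⟩ else 0 := by
      intro f
      rw [multiset_sum_map_sum]
      have hw : ∀ w ∈ (μ f).support, (((Q f w).map (fun q => (q, w))).map φ).sum
          = (if dg f' = dg f
              then C (μ f w) * e ⟨(f : MvPolynomial (Fin N) ℂ), hTV f⟩ else 0)
            * C (eval w (f' : MvPolynomial (Fin N) ℂ)) := by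
        intro w _
        rw [Multiset.map_map]
        have : (φ ∘ fun q => (q, w))
            = fun q => q ^ dg f' * C (eval w (f' : MvPolynomial (Fin N) ℂ)) := rfl
        rw [this, Multiset.sum_map_mul_right, hQ f w (dg f') (hdg1 f') (hdgD f')]
      by_cases hff : f = f'
      · subst hff
        rw [if_pos rfl]
        have hw' : ∀ w ∈ (μ f).support, (((Q f w).map (fun q => (q, w))).map φ).sum
            = e ⟨(f : MvPolynomial (Fin N) ℂ), hTV f⟩
              * C (μ f w * eval w (f : MvPolynomial (Fin N) ℂ)) := by
          intro w hww
          rw [hw w hww, if_pos rfl, map_mul]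
          ring
        rw [Finset.sum_congr rfl hw', ← Finset.mul_sum, ← map_sum]
        have hμf := hμ f f
        rw [if_pos rfl] at hμf
        have h1 : ∑ w ∈ (μ f).support, μ f w * eval w (f : MvPolynomial (Fin N) ℂ) = 1 := hμf
        rw [h1, map_one, mul_one]
      · rw [if_neg hff]
        by_cases hdgf : dg f' = dg f
        · have hw' : ∀ w ∈ (μ f).support, (((Q f w).map (fun q => (q, w))).map φ).sum
              = e ⟨(f : MvPolynomial (Fin N) ℂ), hTV f⟩
                * C (μ f w * eval w (f' : MvPolynomial (Fin N) ℂ)) := by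
            intro w hww
            rw [hw w hww, if_pos hdgf, map_mul]
            ring
          rw [Finset.sum_congr rfl hw', ← Finset.mul_sum, ← map_sum]
          have hμf := hμ f f'
          rw [if_neg (fun h => hff h.symm)] at hμf
          have h1 : ∑ w ∈ (μ f).support, μ f w * eval w (f' : MvPolynomial (Fin N) ℂ) = 0 := hμf
          rw [h1, map_zero, mul_zero]
        · have hw' : ∀ w ∈ (μ f).support, (((Q f w).map (fun q => (q, w))).map φ).sum = 0 := by
            intro w hww
            rw [hw w hww, if_neg hdgf, zero_mul]
          rw [Finset.sum_congr rfl hw']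
          exact Finset.sum_const_zero
    rw [hSlots, multiset_sum_map_sum, Finset.sum_congr rfl (fun f _ => hterm f),
      Finset.sum_ite_eq' Finset.univ f'
        (fun _ => e ⟨(f' : MvPolynomial (Fin N) ℂ), hTV f'⟩),
      if_pos (Finset.mem_univ f')]
  -- end of KP
  have KPlist : ∃ SL : List (MvPolynomial (Fin κ) ℂ × (Fin N → ℂ)), ∀ f' : T,
      ((SL.map (fun p => p.1 ^ dg f' * C (eval p.2 (f' : MvPolynomial (Fin N) ℂ)))).sum
        = e ⟨(f' : MvPolynomial (Fin N) ℂ), hTV f'⟩) := by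
    refine ⟨Slots.toList, fun f' => ?_⟩
    rw [← KP f']
    conv_rhs => rw [← Multiset.coe_toList Slots]
    rw [Multiset.map_coe, Multiset.sum_coe]
  obtain ⟨SL, hKP⟩ := KPlist
  refine ⟨SL.length, fun r hr y z hz hdvd => ?_⟩
  set pad : ℕ → MvPolynomial (Fin κ) ℂ × (Fin N → ℂ) := fun n => SL.getD n (0, 0) with hpad
  set G : Fin r × Fin N → MvPolynomial (Fin κ) ℂ :=
    fun p => (pad p.1).1 * C ((pad p.1).2 p.2) with hG
  set ρ : MvPolynomial (Fin r × Fin N) ℂ →ₐ[ℂ] MvPolynomial (Fin κ) ℂ := aeval G with hρ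
  have hcontrib : ∀ (f : T) (s : Fin r),
      aeval (fun ℓ => G (s, ℓ)) (f : MvPolynomial (Fin N) ℂ)
        = (pad (s : ℕ)).1 ^ dg f * C (eval (pad (s : ℕ)).2 (f : MvPolynomial (Fin N) ℂ)) := by
    intro f s
    have h0 := homog_eval (hdg2 f) (pad (s : ℕ)).1 (pad (s : ℕ)).2
    rw [MvPolynomial.algebraMap_eq] at h0
    simp only [hG]
    exact h0
  have hmemV : ∀ {x : MvPolynomial (Fin N) ℂ}, x ∈ Submodule.span ℂ T → x ∈ V := by
    intro x hx
    rw [hVT]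
    exact hx
  set eV : MvPolynomial (Fin N) ℂ → MvPolynomial (Fin κ) ℂ :=
    fun f => if hf : f ∈ V then e ⟨f, hf⟩ else 0 with heV
  have heVapp : ∀ {x : MvPolynomial (Fin N) ℂ} (hx : x ∈ V), eV x = e ⟨x, hx⟩ := by
    intro x hx
    simp only [heV]
    exact dif_pos hx
  have main : ∀ (f : MvPolynomial (Fin N) ℂ) (hf : f ∈ Submodule.span ℂ T),
      ρ (∑ s : Fin r, rename (Prod.mk s) f) = eV f := by
    intro f hf
    induction hf using Submodule.span_induction with
    | mem x hx =>
        set fT : T := ⟨x, hx⟩ with hfT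
        have hdgne : dg fT ≠ 0 := by have := hdg1 fT; omega
        calc ρ (∑ s : Fin r, rename (Prod.mk s) x)
            = ∑ s : Fin r, aeval (fun ℓ => G (s, ℓ)) x := by
              rw [map_sum]
              refine Finset.sum_congr rfl fun s _ => ?_
              rw [hρ, MvPolynomial.aeval_rename]
              rfl
          _ = ∑ s : Fin r, ((pad (s : ℕ)).1 ^ dg fT * C (eval (pad (s : ℕ)).2 x)) :=
              Finset.sum_congr rfl (fun s _ => hcontrib fT s)
          _ = ∑ n ∈ Finset.range r, ((pad n).1 ^ dg fT * C (eval (pad n).2 x)) :=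
              Fin.sum_univ_eq_sum_range (fun n => (pad n).1 ^ dg fT * C (eval (pad n).2 x)) r
          _ = ∑ n ∈ Finset.range SL.length, ((pad n).1 ^ dg fT * C (eval (pad n).2 x)) := by
              symm
              apply Finset.sum_subset (Finset.range_subset_range.2 hr)
              intro n _ hn
              rw [Finset.mem_range, not_lt] at hn
              have hp : pad n = (0, 0) := by
                rw [hpad]
                exact List.getD_eq_default _ _ hn
              rw [hp, zero_pow hdgne, zero_mul]
          _ = (SL.map (fun p => p.1 ^ dg fT * C (eval p.2 x))).sum := by
              simp only [hpad]
              exact list_sum_range SL (0, 0) (fun p => p.1 ^ dg fT * C (eval p.2 x))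
          _ = e ⟨x, hTV fT⟩ := hKP fT
          _ = eV x := (heVapp (hTV fT)).symm
    | zero =>
        have h0 : (⟨0, zero_mem V⟩ : V) = 0 := rfl
        rw [heVapp (zero_mem V), h0, map_zero]
        simp
    | add x y hx hy ihx ihy =>
        have hxV := hmemV hx
        have hyV := hmemV hy
        have hsum : ∀ s : Fin r, rename (Prod.mk s) (x + y)
            = rename (Prod.mk s) x + rename (Prod.mk s) y := fun s => map_add _ _ _
        rw [Finset.sum_congr rfl (fun s _ => hsum s), Finset.sum_add_distrib, map_add,
          ihx, ihy, heVapp hxV, heVapp hyV, heVapp (add_mem hxV hyV)]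
        have : (⟨x + y, add_mem hxV hyV⟩ : V) = ⟨x, hxV⟩ + ⟨y, hyV⟩ := rfl
        rw [this, map_add]
    | smul a x hx ihx =>
        have hxV := hmemV hx
        have hsm : ∀ s : Fin r, rename (Prod.mk s) (a • x)
            = a • rename (Prod.mk s) x := fun s => map_smul _ _ _
        rw [Finset.sum_congr rfl (fun s _ => hsm s), ← Finset.smul_sum, map_smul,
          ihx, heVapp hxV, heVapp (Submodule.smul_mem V a hxV)]
        have : (⟨a • x, Submodule.smul_mem V a hxV⟩ : V) = a • ⟨x, hxV⟩ := rfl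
        rw [this, map_smul]
  have hcomp : ∀ x, ρ (iMap N κ r V b x) = x := by
    have h2 : ρ.comp (iMap N κ r V b) = AlgHom.id ℂ (MvPolynomial (Fin κ) ℂ) := by
      apply MvPolynomial.algHom_ext
      intro u
      have h1 : iMap N κ r V b (X u)
          = ∑ s : Fin r, rename (Prod.mk s) ((b u : MvPolynomial (Fin N) ℂ)) := by
        rw [iMap]
        exact aeval_X _ u
      have hbu : (b u : MvPolynomial (Fin N) ℂ) ∈ Submodule.span ℂ T := by
        rw [← hVT]
        exact (b u).2
      have h3 : (⟨(b u : MvPolynomial (Fin N) ℂ), (b u).2⟩ : V) = b u := rfl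
      rw [AlgHom.comp_apply, h1, main _ hbu, heVapp (b u).2, h3, heb u, AlgHom.id_apply]
    intro x
    have := DFunLike.congr_fun h2 x
    simpa using this
  obtain ⟨q, hq⟩ := hdvd
  exact ⟨ρ q, by rw [← hcomp y, hq, map_mul, hcomp z]⟩

end
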